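/- Let m ≥ 1 be an integer and let x₁, …, x_{m+1} ≥ 0 be real numbers with x₁ + ⋯ + x_m ≤ x_{m+1}. Then (2/(m+1))·√((x₁ + ⋯ + x_m)·x_{m+1}) ≥ (x₁·x₂·⋯·x_{m+1})^{1/(m+1)}. -/

import Mathlib

theorem amgm_type_inequality (m : ℕ) (hm : 1 ≤ m) (x : Fin (m + 1) → ℝ)
    (hx : ∀ i, 0 ≤ x i)
    (hsum : ∑ i : Fin m, x i.castSucc ≤ x (Fin.last m)) :
    (2 / (m + 1)) * Real.sqrt ((∑ i : Fin m, x i.castSucc) * x (Fin.last m)) ≥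
      (∏ i, x i) ^ ((1 : ℝ) / (m + 1)) := by
  set a : ℝ := ∑ i : Fin m, x i.castSucc with ha_def
  set b : ℝ := x (Fin.last m) with hb_def
  have ha0 : 0 ≤ a := Finset.sum_nonneg fun i _ => hx _
  have hb0 : 0 ≤ b := hx _
  have hm0 : (0:ℝ) < (m:ℝ) := by exact_mod_cast Nat.pos_of_ne_zero (by omega)
  have hm1 : (0:ℝ) < (m:ℝ) + 1 := by linarith
  have hm1' : (1:ℝ) ≤ (m:ℝ) := by exact_mod_cast hm
  set P : ℝ := ∏ i : Fin m, x i.castSucc with hP_def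
  have hP0 : 0 ≤ P := Finset.prod_nonneg fun i _ => hx _
  have hprod : ∏ i, x i = P * b := Fin.prod_univ_castSucc x
  -- Step 1 : AM-GM, P ≤ (a/m)^m
  have hPa : P ≤ (a / m) ^ m := by
    have hgm := Real.geom_mean_le_arith_mean_weighted Finset.univ
      (fun _ : Fin m => 1 / (m:ℝ)) (fun i => x i.castSucc)
      (fun i _ => by positivity)
      (by simp [Finset.sum_const, Finset.card_univ]; field_simp)
      (fun i _ => hx _)
    have h1 : (∏ i : Fin m, (x i.castSucc) ^ ((1:ℝ)/m)) = P ^ ((1:ℝ)/m) :=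
      Real.finset_prod_rpow _ _ (fun i _ => hx _) _
    have h2 : ∑ i : Fin m, (1/(m:ℝ)) * x i.castSucc = a / m := by
      rw [← Finset.mul_sum]; ring
    have h3 : P ^ ((1:ℝ)/m) ≤ a / m := by rw [← h1, ← h2]; exact hgm
    have h4 : (P ^ ((1:ℝ)/m)) ^ m ≤ (a/m) ^ m :=
      pow_le_pow_left₀ (Real.rpow_nonneg hP0 _) h3 m
    calc P = (P ^ ((1:ℝ)/m)) ^ m := by
          rw [← Real.rpow_natCast (P ^ ((1:ℝ)/m)) m, ← Real.rpow_mul hP0]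
          rw [one_div, inv_mul_cancel₀ (ne_of_gt hm0), Real.rpow_one]
      _ ≤ (a/m) ^ m := h4
  -- numeric fact: (m+1)^(m+1) ≤ 2^(m+1) * m^m, via Bernoulli
  have hnum : ((m:ℝ)+1)^(m+1) ≤ 2^(m+1) * (m:ℝ)^m := by
    have hr : (-2:ℝ) ≤ ((m:ℝ)-1)/((m:ℝ)+1) := by
      have := div_nonneg (by linarith : (0:ℝ) ≤ (m:ℝ)-1) (le_of_lt hm1)
      linarith
    have hber := one_add_mul_le_pow hr (m+1)
    have e1 : 1 + ((m+1:ℕ):ℝ) * (((m:ℝ)-1)/((m:ℝ)+1)) = m := by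
      push_cast; field_simp; ring
    have e2 : (1:ℝ) + ((m:ℝ)-1)/((m:ℝ)+1) = 2*(m:ℝ)/((m:ℝ)+1) := by
      field_simp; ring
    have h5 : (m:ℝ) ≤ (2*(m:ℝ)/((m:ℝ)+1))^(m+1) := by
      have h5' := hber; rw [e2, e1] at h5'; exact h5'
    have h6 : (m:ℝ) * ((m:ℝ)+1)^(m+1) ≤ (2*(m:ℝ))^(m+1) := by
      rw [div_pow, le_div_iff₀ (by positivity)] at h5
      linarith
    have h7 : (2*(m:ℝ))^(m+1) = (2^(m+1) * (m:ℝ)^m) * m := by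
      rw [mul_pow, pow_succ]; ring
    refine le_of_mul_le_mul_right ?_ hm0
    calc ((m:ℝ)+1)^(m+1) * m = (m:ℝ) * ((m:ℝ)+1)^(m+1) := by ring
      _ ≤ (2*(m:ℝ))^(m+1) := h6
      _ = (2^(m+1) * (m:ℝ)^m) * m := h7
  -- a ≤ √(ab)
  have hsab : a ≤ Real.sqrt (a*b) := by
    have : a = Real.sqrt (a^2) := (Real.sqrt_sq ha0).symm
    rw [this]
    exact Real.sqrt_le_sqrt (by nlinarith)
  set c : ℝ := 2/((m:ℝ)+1) * Real.sqrt (a*b) with hc_def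
  have hc0 : 0 ≤ c := by positivity
  have hkey : P * b ≤ c ^ (m+1) := by
    have e4 : (Real.sqrt (a*b))^(m+1) = (Real.sqrt (a*b))^(m-1) * (a*b) := by
      rw [show m+1 = (m-1)+2 by omega, pow_add, Real.sq_sqrt (mul_nonneg ha0 hb0)]
    have e5 : a^(m-1) ≤ (Real.sqrt (a*b))^(m-1) := pow_le_pow_left₀ ha0 hsab _
    have e6 : a^(m-1) * (a*b) = a^m * b := by
      rw [show a^(m-1)*(a*b) = (a^(m-1)*a)*b by ring, ← pow_succ,
        show m-1+1 = m by omega]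
    have h8 : a^m * b ≤ (Real.sqrt (a*b))^(m+1) := by
      rw [e4, ← e6]
      exact mul_le_mul_of_nonneg_right e5 (mul_nonneg ha0 hb0)
    have h9 : P * b ≤ (a/m)^m * b := mul_le_mul_of_nonneg_right hPa hb0
    have hscal : (1:ℝ)/(m:ℝ)^m ≤ (2/((m:ℝ)+1))^(m+1) := by
      rw [div_pow, div_le_div_iff₀ (by positivity) (by positivity)]
      nlinarith [hnum]
    have h10 : (a/m)^m * b ≤ (2/((m:ℝ)+1))^(m+1) * (a^m * b) := by
      have e7 : (a/m)^m * b = (1/(m:ℝ)^m) * (a^m*b) := by rw [div_pow]; ring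
      rw [e7]
      exact mul_le_mul_of_nonneg_right hscal (by positivity)
    calc P * b ≤ (a/m)^m * b := h9
      _ ≤ (2/((m:ℝ)+1))^(m+1) * (a^m*b) := h10
      _ ≤ (2/((m:ℝ)+1))^(m+1) * (Real.sqrt (a*b))^(m+1) :=
          mul_le_mul_of_nonneg_left h8 (by positivity)
      _ = c^(m+1) := (mul_pow _ _ _).symm
  rw [ge_iff_le, hprod]
  calc (P*b) ^ ((1:ℝ)/((m:ℝ)+1)) ≤ (c^(m+1)) ^ ((1:ℝ)/((m:ℝ)+1)) :=
      Real.rpow_le_rpow (mul_nonneg hP0 hb0) hkey (by positivity)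
    _ = c := by
      rw [← Real.rpow_natCast c (m+1), ← Real.rpow_mul hc0]
      rw [show ((m+1:ℕ):ℝ) * ((1:ℝ)/((m:ℝ)+1)) = 1 by push_cast; field_simp]
      exact Real.rpow_one c
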